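/- Let (A, f) and (B, g) be finite dynamical systems and let C = (A × B, Prod.map f g) be their product. Then for every k ∈ ℕ, the number of states of C of height k satisfies |C|_k = |A|_k · |B|_{≤k} + |B|_k · |A|_{≤k} − |A|_k · |B|_k, where |D|_{≤k} = ∑_{i=0}^{k} |D|_i. -/

import Mathlib

/-- A state `x` of a dynamical system `(A, f)` is periodic if some positive
iterate of `f` fixes it. -/
def IsPeriodicState {A : Type*} (f : A → A) (x : A) : Prop :=
  ∃ k : ℕ, 1 ≤ k ∧ f^[k] x = x

/-- The height of a state `x`: the least `h` such that `f^[h] x` is periodic. -/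
noncomputable def height {A : Type*} (f : A → A) (x : A) : ℕ :=
  sInf {h : ℕ | IsPeriodicState f (f^[h] x)}

/-- The number of states of height `i` in the dynamical system `(A, f)`. -/
noncomputable def heightCount {A : Type*} (f : A → A) (i : ℕ) : ℕ :=
  Nat.card {x : A // height f x = i}

/-- The number of states of height at most `k` in the dynamical system `(A, f)`. -/
noncomputable def heightCountLE {A : Type*} (f : A → A) (k : ℕ) : ℕ :=
  ∑ i ∈ Finset.range (k + 1), heightCount f i

lemma IsPeriodicState.apply {A : Type*} {f : A → A} {x : A}
    (h : IsPeriodicState f x) : IsPeriodicState f (f x) := by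
  obtain ⟨k, hk, hx⟩ := h
  exact ⟨k, hk, by rw [← Function.iterate_succ_apply, Function.iterate_succ_apply', hx]⟩

lemma isPeriodicState_mono {A : Type*} {f : A → A} {x : A} {h h' : ℕ} (hle : h ≤ h')
    (hp : IsPeriodicState f (f^[h] x)) : IsPeriodicState f (f^[h'] x) := by
  induction h' , hle using Nat.le_induction with
  | base => exact hp
  | succ n hn ih => rw [Function.iterate_succ_apply']; exact ih.apply

lemma exists_periodic_iterate {A : Type*} [Finite A] (f : A → A) (x : A) :
    ∃ h : ℕ, IsPeriodicState f (f^[h] x) := by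
  obtain ⟨m, n, hmn, he⟩ := Finite.exists_ne_map_eq_of_infinite (fun n : ℕ => f^[n] x)
  have key : ∀ m n : ℕ, m < n → f^[m] x = f^[n] x → ∃ h, IsPeriodicState f (f^[h] x) := by
    intro m n hlt he
    refine ⟨m, n - m, by omega, ?_⟩
    rw [← Function.iterate_add_apply, show n - m + m = n by omega]
    exact he.symm
  rcases hmn.lt_or_gt with h | h
  · exact key m n h he
  · exact key n m h he.symm

lemma isPeriodicState_prod_iff {A B : Type*} {f : A → A} {g : B → B} {x : A} {y : B} :
    IsPeriodicState (Prod.map f g) (x, y) ↔ IsPeriodicState f x ∧ IsPeriodicState g y := by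
  constructor
  · rintro ⟨k, hk, h⟩
    rw [Prod.map_iterate] at h
    simp only [Prod.map_apply, Prod.mk.injEq] at h
    exact ⟨⟨k, hk, h.1⟩, ⟨k, hk, h.2⟩⟩
  · rintro ⟨⟨k1, hk1, h1⟩, ⟨k2, hk2, h2⟩⟩
    refine ⟨k1 * k2, Nat.one_le_iff_ne_zero.2 (by positivity), ?_⟩
    rw [Prod.map_iterate]
    simp only [Prod.map_apply, Prod.mk.injEq]
    constructor
    · rw [Function.iterate_mul]; exact Function.iterate_fixed h1 k2
    · rw [mul_comm, Function.iterate_mul]; exact Function.iterate_fixed h2 k1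

lemma height_prod {A B : Type*} [Finite A] [Finite B] (f : A → A) (g : B → B) (x : A) (y : B) :
    height (Prod.map f g) (x, y) = max (height f x) (height g y) := by
  have hA : IsPeriodicState f (f^[height f x] x) :=
    Nat.sInf_mem (exists_periodic_iterate f x)
  have hB : IsPeriodicState g (g^[height g y] y) :=
    Nat.sInf_mem (exists_periodic_iterate g y)
  have hmax : IsPeriodicState (Prod.map f g) ((Prod.map f g)^[max (height f x) (height g y)] (x, y)) := by
    rw [Prod.map_iterate]
    exact isPeriodicState_prod_iff.2
      ⟨isPeriodicState_mono (le_max_left _ _) hA, isPeriodicState_mono (le_max_right _ _) hB⟩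
  refine le_antisymm (Nat.sInf_le hmax) ?_
  have hmem : IsPeriodicState (Prod.map f g)
      ((Prod.map f g)^[height (Prod.map f g) (x, y)] (x, y)) :=
    Nat.sInf_mem (exists_periodic_iterate (Prod.map f g) (x, y))
  rw [Prod.map_iterate] at hmem
  obtain ⟨h1, h2⟩ := isPeriodicState_prod_iff.1 hmem
  exact max_le (Nat.sInf_le h1) (Nat.sInf_le h2)

lemma heightCount_eq_card {A : Type*} [Fintype A] (f : A → A) (i : ℕ) :
    heightCount f i = (Finset.univ.filter fun x => height f x = i).card := by
  rw [heightCount, Nat.card_eq_fintype_card, Fintype.card_subtype]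

lemma heightCountLE_eq_card {A : Type*} [Fintype A] (f : A → A) (k : ℕ) :
    heightCountLE f k = (Finset.univ.filter fun x => height f x ≤ k).card := by
  rw [heightCountLE,
    Finset.card_eq_sum_card_fiberwise (f := height f) (t := Finset.range (k + 1))
      (fun x hx => Finset.mem_range.2 (by
        simp only [Finset.mem_coe, Finset.mem_filter] at hx; omega))]
  refine Finset.sum_congr rfl fun i hi => ?_
  rw [heightCount_eq_card, Finset.filter_filter]
  congr 1
  ext x
  simp only [Finset.mem_range] at hi
  simp only [Finset.mem_filter, Finset.mem_univ, true_and]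
  constructor
  · intro h; exact ⟨by rw [h]; omega, h⟩
  · exact fun h => h.2

/-- Counting the states of height `k` in a product of two finite dynamical
systems: `|C|_k = |A|_k · |B|_{≤k} + |B|_k · |A|_{≤k} − |A|_k · |B|_k`. -/
theorem heightCount_prod {A B : Type*} [Fintype A] [Fintype B]
    (f : A → A) (g : B → B) (k : ℕ) :
    heightCount (Prod.map f g) k =
      heightCount f k * heightCountLE g k + heightCount g k * heightCountLE f k
        - heightCount f k * heightCount g k := by
  classical
  set a : Finset A := Finset.univ.filter fun x => height f x = k with ha
  set a' : Finset A := Finset.univ.filter fun x => height f x ≤ k with ha'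
  set b : Finset B := Finset.univ.filter fun y => height g y = k with hb
  set b' : Finset B := Finset.univ.filter fun y => height g y ≤ k with hb'
  have hS : (Finset.univ.filter fun p : A × B => height (Prod.map f g) p = k) =
      (a ×ˢ b') ∪ (a' ×ˢ b) := by
    ext ⟨x, y⟩
    simp only [ha, ha', hb, hb', Finset.mem_filter, Finset.mem_union, Finset.mem_product,
      Finset.mem_univ, true_and, height_prod, max_eq_iff]
    omega
  have hI : (a ×ˢ b') ∩ (a' ×ˢ b) = a ×ˢ b := by
    ext ⟨x, y⟩
    simp only [ha, ha', hb, hb', Finset.mem_inter, Finset.mem_product, Finset.mem_filter,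
      Finset.mem_univ, true_and]
    omega
  have hcard := Finset.card_union_add_card_inter (a ×ˢ b') (a' ×ˢ b)
  rw [hI, Finset.card_product, Finset.card_product, Finset.card_product] at hcard
  rw [heightCount_eq_card, hS, heightCount_eq_card f, heightCount_eq_card g,
    heightCountLE_eq_card, heightCountLE_eq_card, ← ha, ← ha', ← hb, ← hb', mul_comm b.card a'.card]
  omega
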